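/- If two closed geodesics on the flat 2-torus intersect in exactly k ≥ 1 points, then there exists a change of basis in SL(2,ℤ) (up to sign) taking their homology classes to (1,0) and (x,k), where x is an integer with 1 ≤ x ≤ k (and x ≤ k−1 when k ≥ 2), gcd(x,k) = 1, and x is uniquely determined up to the substitution x ↔ k−x. -/

import Mathlib

noncomputable section

/-- The flat two-dimensional torus `ℝ²/ℤ²`. -/
abbrev Torus : Type := AddCircle (1 : ℝ) × AddCircle (1 : ℝ)

/-- The quotient projection `ℝ² → ℝ²/ℤ²`. -/
def torusProj (v : ℝ × ℝ) : Torus :=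
  ((v.1 : AddCircle (1 : ℝ)), (v.2 : AddCircle (1 : ℝ)))

/-- A vector `(p, q) ∈ ℤ²` is primitive if `gcd(p, q) = 1`. -/
def IsPrimitive (v : ℤ × ℤ) : Prop := Int.gcd v.1 v.2 = 1

/-- The closed geodesic on the torus through (the class of) `b` in direction `v`. -/
def geodesic (b : ℝ × ℝ) (v : ℤ × ℤ) : Set Torus :=
  Set.range (fun t : ℝ => torusProj (b.1 + t * (v.1 : ℝ), b.2 + t * (v.2 : ℝ)))

/-- The number of connected components of the complement of `S`. -/
def regionCount {X : Type*} [TopologicalSpace X] (S : Set X) : ℕ :=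
  Nat.card (ConnectedComponents ↥(Sᶜ))

/-- An arrangement of `n` distinct closed geodesics, given by base points `b`
and primitive direction vectors `v`. -/
def IsArrangement {n : ℕ} (b : Fin n → ℝ × ℝ) (v : Fin n → ℤ × ℤ) : Prop :=
  (∀ i, IsPrimitive (v i)) ∧ Function.Injective (fun i => geodesic (b i) (v i))

/-- Two geodesics are parallel iff their homology classes agree up to sign. -/
def Parallel (v w : ℤ × ℤ) : Prop := v = w ∨ v = -w

/-- If two geodesics intersect in exactly `k ≥ 1` points, a basis change in
`GL(2,ℤ)` takes their classes (up to sign) to `(1,0)` and `(x,k)` with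
`1 ≤ x ≤ k`, `x ≤ k-1` when `k ≥ 2`, `gcd(x,k) = 1`, and `x` unique up to `x ↔ k-x`. -/
lemma coe_eq_coe (x y : ℝ) : (↑x : AddCircle (1:ℝ)) = ↑y ↔ ∃ n : ℤ, x - y = n := by
  constructor
  · intro h
    rw [QuotientAddGroup.eq_iff_sub_mem, AddSubgroup.mem_zmultiples_iff] at h
    obtain ⟨n, hn⟩ := h
    exact ⟨n, by simpa [zsmul_eq_mul] using hn.symm⟩
  · rintro ⟨n, hn⟩
    rw [QuotientAddGroup.eq_iff_sub_mem, AddSubgroup.mem_zmultiples_iff]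
    exact ⟨n, by simpa [zsmul_eq_mul] using hn.symm⟩

def tmap (a b c d : ℤ) : Torus → Torus :=
  fun z => (a • z.1 + b • z.2, c • z.1 + d • z.2)

lemma zsmul_coe (n : ℤ) (x : ℝ) : n • (↑x : AddCircle (1:ℝ)) = ((n * x : ℝ) : AddCircle (1:ℝ)) := by
  rw [← zsmul_eq_mul]
  exact (QuotientAddGroup.mk_zsmul _ x n).symm

lemma tmap_proj (a b c d : ℤ) (v : ℝ × ℝ) :
    tmap a b c d (torusProj v) = torusProj (a * v.1 + b * v.2, c * v.1 + d * v.2) := by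
  simp only [tmap, torusProj, zsmul_coe]
  rfl

lemma tmap_tmap (a b c d a' b' c' d' : ℤ) (z : Torus) :
    tmap a b c d (tmap a' b' c' d' z) =
      tmap (a*a'+b*c') (a*b'+b*d') (c*a'+d*c') (c*b'+d*d') z := by
  simp only [tmap, smul_add, smul_smul, add_smul]
  exact Prod.ext (by abel) (by abel)

lemma tmap_one (z : Torus) : tmap 1 0 0 1 z = z := by
  simp [tmap]

lemma tmap_bijective (a b c d : ℤ) (h : a * d - b * c = 1) :
    Function.Bijective (tmap a b c d) := by
  refine Function.bijective_iff_has_inverse.mpr ⟨tmap d (-b) (-c) a, fun z => ?_, fun z => ?_⟩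
  · rw [tmap_tmap]
    have e1 : d*a + -b*c = 1 := by linarith
    have e2 : d*b + -b*d = 0 := by ring
    have e3 : -c*a + a*c = 0 := by ring
    have e4 : -c*b + a*d = 1 := by linarith
    rw [e1, e2, e3, e4, tmap_one]
  · rw [tmap_tmap]
    have e1 : a*d + b*(-c) = 1 := by linarith
    have e2 : a*(-b) + b*a = 0 := by ring
    have e3 : c*d + d*(-c) = 0 := by ring
    have e4 : c*(-b) + d*a = 1 := by linarith
    rw [e1, e2, e3, e4, tmap_one]

lemma tmap_geodesic (a b c d : ℤ) (β : ℝ × ℝ) (v : ℤ × ℤ) :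
    tmap a b c d '' geodesic β v =
      geodesic ((a:ℝ)*β.1 + (b:ℝ)*β.2, (c:ℝ)*β.1 + (d:ℝ)*β.2)
        (a*v.1 + b*v.2, c*v.1 + d*v.2) := by
  unfold geodesic
  rw [← Set.range_comp]
  apply congrArg
  funext t
  simp only [Function.comp_apply, tmap_proj]
  apply congrArg
  exact Prod.ext (by push_cast; ring) (by push_cast; ring)

lemma geodesic_horiz (c : ℝ × ℝ) (e : ℤ) (he : e = 1 ∨ e = -1) :
    geodesic c (e, 0) = Set.univ ×ˢ {((c.2 : ℝ) : AddCircle (1:ℝ))} := by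
  ext z
  simp only [geodesic, Set.mem_range, Set.mem_prod, Set.mem_univ, Set.mem_singleton_iff,
    true_and, torusProj]
  constructor
  · rintro ⟨t, rfl⟩
    simp
  · intro hz
    obtain ⟨u, hu⟩ : ∃ u : ℝ, (↑u : AddCircle (1:ℝ)) = z.1 :=
      Quotient.exists_rep z.1
    refine ⟨(u - c.1) / e, ?_⟩
    have he' : (e : ℝ) ≠ 0 := by rcases he with h | h <;> simp [h]
    have h1 : c.1 + (u - c.1) / (e:ℝ) * (e:ℝ) = u := by field_simp; ring
    have h2 : c.2 + (u - c.1) / (e:ℝ) * ((0:ℤ):ℝ) = c.2 := by simp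
    rw [h1, h2, hu, ← hz]

lemma addCircle_infinite : Infinite (AddCircle (1:ℝ)) := by
  refine Infinite.of_injective (fun n : ℕ => ((1 / (n + 2) : ℝ) : AddCircle (1:ℝ))) ?_
  intro n m h
  rw [coe_eq_coe] at h
  obtain ⟨j, hj⟩ := h
  have hn : (0:ℝ) < 1 / (n + 2) := by positivity
  have hm : (0:ℝ) < 1 / (m + 2) := by positivity
  have hn' : (1:ℝ) / (n + 2) ≤ 1 / 2 := by
    rw [div_le_div_iff₀ (by positivity) (by norm_num)]
    push_cast; linarith
  have hm' : (1:ℝ) / (m + 2) ≤ 1 / 2 := by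
    rw [div_le_div_iff₀ (by positivity) (by norm_num)]
    push_cast; linarith
  have hj0 : j = 0 := by
    have h1 : (j : ℝ) < 1 := by rw [← hj]; linarith
    have h2 : (-1 : ℝ) < j := by rw [← hj]; linarith
    have h1' : j < 1 := by exact_mod_cast h1
    have h2' : -1 < j := by exact_mod_cast h2
    omega
  rw [hj0] at hj
  have h3 : (1:ℝ) / (n + 2) = 1 / (m + 2) := by push_cast at hj ⊢; linarith
  field_simp at h3
  have h4 : (n:ℝ) = m := by linarith
  exact_mod_cast h4

lemma card_horiz_inter (β : ℝ) (c : ℝ × ℝ) (xx dd : ℤ) (hgcd : Int.gcd xx dd = 1)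
    (hd : dd ≠ 0) :
    Nat.card ↥((Set.univ ×ˢ {((β : ℝ) : AddCircle (1:ℝ))} : Set Torus) ∩ geodesic c (xx, dd))
      = dd.natAbs := by
  set k : ℕ := dd.natAbs with hkdef
  have hkpos : 0 < k := Int.natAbs_pos.mpr hd
  have hdR : (dd : ℝ) ≠ 0 := Int.cast_ne_zero.mpr hd
  set g : ℤ → Torus := fun n =>
    torusProj (c.1 + ((β - c.2 + n) / dd) * xx, c.2 + ((β - c.2 + n) / dd) * dd) with hg
  -- the intersection is the range of g
  have hrange : (Set.univ ×ˢ {((β : ℝ) : AddCircle (1:ℝ))} : Set Torus) ∩ geodesic c (xx, dd)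
      = Set.range g := by
    ext z
    simp only [Set.mem_inter_iff, Set.mem_prod, Set.mem_univ, Set.mem_singleton_iff, true_and,
      geodesic, Set.mem_range]
    constructor
    · rintro ⟨hz2, t, rfl⟩
      simp only [torusProj] at hz2
      rw [coe_eq_coe] at hz2
      obtain ⟨n, hn⟩ := hz2
      refine ⟨n, ?_⟩
      have ht : t = (β - c.2 + n) / dd := by
        field_simp
        linarith
      rw [hg]
      simp only
      rw [← ht]
    · rintro ⟨n, rfl⟩
      constructor
      · simp only [hg, torusProj]
        rw [coe_eq_coe]
        refine ⟨n, ?_⟩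
        field_simp
        ring
      · exact ⟨(β - c.2 + n) / dd, rfl⟩
  -- when are two values of g equal
  have hgeq : ∀ n m : ℤ, g n = g m ↔ (k : ℤ) ∣ n - m := by
    intro n m
    simp only [hg, torusProj, Prod.ext_iff]
    constructor
    · rintro ⟨hfst, -⟩
      rw [coe_eq_coe] at hfst
      obtain ⟨j, hj⟩ := hfst
      have hR : ((n : ℝ) - m) * xx = j * dd := by
        field_simp at hj
        ring_nf at hj ⊢
        linarith
      have hZ : (n - m) * xx = j * dd := by exact_mod_cast hR
      have hdvd : dd ∣ (n - m) * xx := ⟨j, by linear_combination hZ⟩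
      have hcop : IsCoprime dd xx := by
        rw [Int.isCoprime_iff_gcd_eq_one, Int.gcd_comm]
        exact hgcd
      have : dd ∣ n - m := hcop.dvd_of_dvd_mul_right hdvd
      rwa [← Int.natAbs_dvd] at this
    · intro hdvd
      obtain ⟨j, hj⟩ := hdvd
      obtain ⟨j', hj'⟩ : ∃ j' : ℤ, n - m = dd * j' := by
        rcases Int.natAbs_eq dd with hsgn | hsgn
        · have hdd1 : dd = (k:ℤ) := by rw [hkdef]; exact_mod_cast hsgn
          exact ⟨j, by linear_combination hj - j * hdd1⟩
        · have hdd2 : dd = -(k:ℤ) := by rw [hkdef]; exact_mod_cast hsgn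
          exact ⟨-j, by linear_combination hj + j * hdd2⟩
      have hR : (n : ℝ) - m = dd * j' := by exact_mod_cast hj'
      constructor
      · rw [coe_eq_coe]
        refine ⟨j' * xx, ?_⟩
        field_simp
        linear_combination (norm := (push_cast; ring)) (xx : ℝ) * hR
      · rw [coe_eq_coe]
        refine ⟨n - m, ?_⟩
        push_cast
        field_simp
        ring
  -- build the bijection with ZMod k
  have hNeZero : NeZero k := ⟨hkpos.ne'⟩
  set h : ZMod k → Torus := fun z => g z.val with hh
  have hinj : Function.Injective h := by
    intro z z' hzz
    rw [hh] at hzz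
    simp only at hzz
    rw [hgeq] at hzz
    obtain ⟨t, ht⟩ := hzz
    have hz1 : (z.val : ℤ) < k := by exact_mod_cast ZMod.val_lt z
    have hz2 : (z'.val : ℤ) < k := by exact_mod_cast ZMod.val_lt z'
    have h0 : ((z.val : ℤ) - z'.val) = 0 := by
      refine Int.eq_zero_of_abs_lt_dvd ⟨t, ht⟩ ?_
      rw [abs_lt]
      constructor <;> [linarith [Int.ofNat_nonneg z.val, Int.ofNat_nonneg z'.val]; skip]
      linarith [Int.ofNat_nonneg z.val, Int.ofNat_nonneg z'.val]
    have : z.val = z'.val := by omega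
    exact ZMod.val_injective k this
  have hrangeh : Set.range h = Set.range g := by
    apply Set.Subset.antisymm
    · rintro _ ⟨z, rfl⟩; exact ⟨z.val, rfl⟩
    · rintro _ ⟨n, rfl⟩
      refine ⟨(n : ZMod k), ?_⟩
      rw [hh]
      simp only
      rw [hgeq]
      have hcast : (((((n : ZMod k)).val : ℤ) - n : ℤ) : ZMod k) = 0 := by
        push_cast
        simp [ZMod.natCast_val, ZMod.cast_id]
      exact (ZMod.intCast_zmod_eq_zero_iff_dvd _ _).mp hcast
  rw [hrange, ← hrangeh, Nat.card_range_of_injective hinj, Nat.card_zmod]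

lemma key_arith (p q r s xx kk a b c d ε1 ε2 : ℤ)
    (hu1 : ε1 = 1 ∨ ε1 = -1) (hu2 : ε2 = 1 ∨ ε2 = -1)
    (hdet : a*d - b*c = 1 ∨ a*d - b*c = -1)
    (e1 : a*p + b*q = ε1) (e2 : c*p + d*q = 0)
    (e3 : a*r + b*s = ε2*xx) (e4 : c*r + d*s = ε2*kk) :
    ∃ σ : ℤ, (σ = 1 ∨ σ = -1) ∧ kk ∣ (r - σ*p*xx) ∧ kk ∣ (s - σ*q*xx) := by
  have hε : (a*d-b*c)*(a*d-b*c) = 1 := by rcases hdet with h|h <;> rw [h] <;> norm_num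
  have h1sq : ε1*ε1 = 1 := by rcases hu1 with h|h <;> rw [h] <;> norm_num
  have hbD : b*(p*s-q*r) = p*(ε2*xx) - r*ε1 := by linear_combination p*e3 - r*e1
  have haD : a*(p*s-q*r) = s*ε1 - q*(ε2*xx) := by linear_combination s*e1 - q*e3
  have hD : (a*d-b*c)*(p*s-q*r) = ε1*(ε2*kk) := by
    linear_combination (c*r+d*s)*e1 - (ε2*xx)*e2 - (c*p+d*q)*e3 + ε1*e4
  refine ⟨ε1*ε2, ?_, ⟨-((a*d-b*c)*ε2*b), ?_⟩, ⟨(a*d-b*c)*ε2*a, ?_⟩⟩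
  · rcases hu1 with h|h <;> rcases hu2 with h'|h' <;> rw [h, h'] <;> norm_num
  · linear_combination (ε1)*hbD - (ε1*b*(a*d-b*c))*hD + (ε1*b*(p*s-q*r))*hε
      + (-r - (a*d-b*c)*ε2*b*kk)*h1sq
  · linear_combination (-ε1)*haD + (ε1*a*(a*d-b*c))*hD - (ε1*a*(p*s-q*r))*hε
      + ((a*d-b*c)*ε2*a*kk - s)*h1sq

lemma unique_x (p q : ℤ) (hpq : Int.gcd p q = 1) (k : ℕ) (hk : 1 ≤ k)
    (x x' σ σ' r s : ℤ)
    (hσ : σ = 1 ∨ σ = -1) (hσ' : σ' = 1 ∨ σ' = -1)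
    (d1 : (k:ℤ) ∣ r - σ*p*x) (d2 : (k:ℤ) ∣ s - σ*q*x)
    (d1' : (k:ℤ) ∣ r - σ'*p*x') (d2' : (k:ℤ) ∣ s - σ'*q*x')
    (hx1 : 1 ≤ x) (hx2 : x ≤ (k:ℤ)) (hgx : Int.gcd x k = 1)
    (hx1' : 1 ≤ x') (hx2' : x' ≤ (k:ℤ)) (hgx' : Int.gcd x' k = 1) :
    x' = x ∨ x' = (k:ℤ) - x := by
  have hdp : (k:ℤ) ∣ p * (σ*x - σ'*x') := by
    have h := dvd_sub d1' d1
    have he : (r - σ'*p*x') - (r - σ*p*x) = p * (σ*x - σ'*x') := by ring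
    rwa [he] at h
  have hdq : (k:ℤ) ∣ q * (σ*x - σ'*x') := by
    have h := dvd_sub d2' d2
    have he : (s - σ'*q*x') - (s - σ*q*x) = q * (σ*x - σ'*x') := by ring
    rwa [he] at h
  have hbez : (1:ℤ) = p * Int.gcdA p q + q * Int.gcdB p q := by
    have h := Int.gcd_eq_gcd_ab p q
    rw [hpq] at h
    exact_mod_cast h
  have hM : (k:ℤ) ∣ (σ*x - σ'*x') := by
    have h : (σ*x - σ'*x') = Int.gcdA p q * (p * (σ*x - σ'*x'))
        + Int.gcdB p q * (q * (σ*x - σ'*x')) := by linear_combination (σ*x - σ'*x') * hbez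
    rw [h]
    exact dvd_add (hdp.mul_left _) (hdq.mul_left _)
  have hσσ : σ * σ' = 1 ∨ σ * σ' = -1 := by
    rcases hσ with h|h <;> rcases hσ' with h'|h' <;> rw [h, h'] <;> norm_num
  have hσsq : σ * σ = 1 := by rcases hσ with h|h <;> rw [h] <;> norm_num
  rcases hσσ with hss | hss
  · -- k ∣ x - x'
    left
    have hdvd : (k:ℤ) ∣ (x - x') := by
      obtain ⟨t, ht⟩ := hM
      exact ⟨σ * t, by linear_combination σ * ht - x * hσsq + x' * hss⟩
    have h0 : x - x' = 0 := Int.eq_zero_of_abs_lt_dvd hdvd (by rw [abs_lt]; omega)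
    omega
  · -- k ∣ x + x'
    have hdvd : (k:ℤ) ∣ (x + x') := by
      obtain ⟨t, ht⟩ := hM
      exact ⟨σ * t, by linear_combination σ * ht - x * hσsq + x' * hss⟩
    obtain ⟨t, ht⟩ := hdvd
    have hkz : (1:ℤ) ≤ (k:ℤ) := by exact_mod_cast hk
    have ht1 : 1 ≤ t := by
      by_contra h
      push_neg at h
      have hle : t ≤ 0 := by omega
      have : (k:ℤ) * t ≤ 0 := mul_nonpos_of_nonneg_of_nonpos (by positivity) hle
      linarith
    have ht2 : t ≤ 2 := by
      by_contra h
      push_neg at h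
      have h3 : 3 ≤ t := by omega
      have : 3 * (k:ℤ) ≤ (k:ℤ) * t := by nlinarith
      linarith
    interval_cases t
    · right; linarith
    · -- x + x' = 2k forces x = x' = k, so gcd x k = k = 1
      have hxk : x = (k:ℤ) := by linarith
      have hk1 : k = 1 := by
        rw [hxk] at hgx
        simpa [Int.gcd_self, Int.natAbs_natCast] using hgx
      left
      omega

theorem stmt4 (b₁ b₂ : ℝ × ℝ) (v₁ v₂ : ℤ × ℤ)
    (h1 : IsPrimitive v₁) (h2 : IsPrimitive v₂) (k : ℕ) (hk : 1 ≤ k)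
    (hcard : Nat.card ↥(geodesic b₁ v₁ ∩ geodesic b₂ v₂) = k) :
    ∃ (A : Matrix (Fin 2) (Fin 2) ℤ) (x : ℤ) (e₁ e₂ : ℤˣ),
      (A.det = 1 ∨ A.det = -1) ∧
      A.mulVec ![v₁.1, v₁.2] = (e₁ : ℤ) • ![1, 0] ∧
      A.mulVec ![v₂.1, v₂.2] = (e₂ : ℤ) • ![x, (k : ℤ)] ∧
      1 ≤ x ∧ x ≤ (k : ℤ) ∧ (2 ≤ k → x ≤ (k : ℤ) - 1) ∧ Int.gcd x k = 1 ∧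
      ∀ (A' : Matrix (Fin 2) (Fin 2) ℤ) (x' : ℤ) (e₁' e₂' : ℤˣ),
        (A'.det = 1 ∨ A'.det = -1) →
        A'.mulVec ![v₁.1, v₁.2] = (e₁' : ℤ) • ![1, 0] →
        A'.mulVec ![v₂.1, v₂.2] = (e₂' : ℤ) • ![x', (k : ℤ)] →
        1 ≤ x' → x' ≤ (k : ℤ) → Int.gcd x' k = 1 →
        x' = x ∨ x' = (k : ℤ) - x := by
  obtain ⟨p, q⟩ := v₁
  obtain ⟨r, s⟩ := v₂
  unfold IsPrimitive at h1 h2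
  dsimp only at h1 h2
  have hkpos : 0 < k := hk
  -- Bezout for (p,q)
  have hbez : (1:ℤ) = p * Int.gcdA p q + q * Int.gcdB p q := by
    have h := Int.gcd_eq_gcd_ab p q
    rw [h1] at h
    exact_mod_cast h
  set u := Int.gcdA p q with hu
  set w := Int.gcdB p q with hw
  have hdet0 : u * p - w * (-q) = 1 := by linear_combination -hbez
  have hbij := tmap_bijective u w (-q) p hdet0
  set D := p * s - q * r with hD
  set y := u * r + w * s with hy
  -- transform the two geodesics
  have himg1 := tmap_geodesic u w (-q) p b₁ (p, q)
  have hv1 : (u*(p,q).1 + w*(p,q).2, -q*(p,q).1 + p*(p,q).2) = ((1:ℤ), (0:ℤ)) := by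
    dsimp only
    exact Prod.ext (by linear_combination -hbez) (by ring)
  rw [hv1] at himg1
  have himg2 := tmap_geodesic u w (-q) p b₂ (r, s)
  have hv2 : (u*(r,s).1 + w*(r,s).2, -q*(r,s).1 + p*(r,s).2) = (y, D) := by
    dsimp only
    exact Prod.ext (by rw [hy]) (by rw [hD]; ring)
  rw [hv2] at himg2
  set B₁ : ℝ × ℝ := ((u:ℝ)*b₁.1 + (w:ℝ)*b₁.2, ((-q:ℤ):ℝ)*b₁.1 + (p:ℝ)*b₁.2) with hB₁
  set B₂ : ℝ × ℝ := ((u:ℝ)*b₂.1 + (w:ℝ)*b₂.2, ((-q:ℤ):ℝ)*b₂.1 + (p:ℝ)*b₂.2) with hB₂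
  have hcardT : Nat.card ↥(geodesic B₁ (1, 0) ∩ geodesic B₂ (y, D)) = k := by
    rw [← himg1, ← himg2, ← Set.image_inter hbij.injective,
      Nat.card_image_of_injective hbij.injective]
    exact hcard
  -- gcd y D = 1
  have hgyD : Int.gcd y D = 1 := by
    have hGy : (Int.gcd y D : ℤ) ∣ y := Int.gcd_dvd_left _ _
    have hGD : (Int.gcd y D : ℤ) ∣ D := Int.gcd_dvd_right _ _
    have hrr : r = p*y - w*D := by rw [hy, hD]; linear_combination r * hbez
    have hss : s = q*y + u*D := by rw [hy, hD]; linear_combination s * hbez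
    have hGr : (Int.gcd y D : ℤ) ∣ r := by
      rw [hrr]; exact dvd_sub (hGy.mul_left p) (hGD.mul_left w)
    have hGs : (Int.gcd y D : ℤ) ∣ s := by
      rw [hss]; exact dvd_add (hGy.mul_left q) (hGD.mul_left u)
    have : (Int.gcd y D : ℤ) ∣ (Int.gcd r s : ℤ) := Int.dvd_coe_gcd hGr hGs
    rw [h2] at this
    exact_mod_cast Int.eq_one_of_dvd_one (by positivity) this
  rw [geodesic_horiz B₁ 1 (Or.inl rfl)] at hcardT
  -- D ≠ 0, since otherwise the geodesics are parallel
  have hD0 : D ≠ 0 := by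
    intro hD0
    rw [hD0] at hcardT
    have hy1 : y = 1 ∨ y = -1 := by
      have := hgyD
      rw [hD0, Int.gcd_zero_right] at this
      rcases Int.natAbs_eq_iff.mp this with h|h
      · left; exact_mod_cast h
      · right; exact_mod_cast h
    rw [geodesic_horiz B₂ y hy1] at hcardT
    by_cases hBB : ((B₁.2 : ℝ) : AddCircle (1:ℝ)) = ((B₂.2 : ℝ) : AddCircle (1:ℝ))
    · rw [← hBB, Set.inter_self] at hcardT
      have hinf : (Set.univ ×ˢ {((B₁.2:ℝ) : AddCircle (1:ℝ))} : Set Torus).Infinite := by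
        have := addCircle_infinite
        exact Set.infinite_of_injective_forall_mem
          (f := fun a : AddCircle (1:ℝ) => ((a, ((B₁.2:ℝ) : AddCircle (1:ℝ))) : Torus))
          (fun a a' h => (Prod.ext_iff.mp h).1) (fun a => by simp)
      rw [Nat.card_coe_set_eq, hinf.ncard] at hcardT
      omega
    · have hdisj : (Set.univ ×ˢ {((B₁.2:ℝ) : AddCircle (1:ℝ))} : Set Torus)
          ∩ (Set.univ ×ˢ {((B₂.2:ℝ) : AddCircle (1:ℝ))}) = ∅ := by
        ext z
        simp only [Set.mem_inter_iff, Set.mem_prod, Set.mem_univ, Set.mem_singleton_iff,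
          true_and, Set.mem_empty_iff_false, iff_false, not_and]
        intro hz1 hz2
        exact hBB (hz1 ▸ hz2)
      rw [hdisj] at hcardT
      have : Nat.card ↥(∅ : Set Torus) = 0 := by simp
      omega
  -- count: k = |D|
  have hkD : D.natAbs = k := by
    have hcount := card_horiz_inter B₁.2 B₂ y D hgyD hD0
    rw [hcardT] at hcount
    omega
  -- sign unit
  obtain ⟨e₂, hDk⟩ : ∃ e₂ : ℤˣ, D = (e₂:ℤ) * (k:ℤ) := by
    by_cases hpos : 0 < D
    · refine ⟨1, ?_⟩
      rw [← hkD, Int.natAbs_of_nonneg hpos.le]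
      simp
    · refine ⟨-1, ?_⟩
      have hneg : D ≤ 0 := by omega
      rw [← hkD]
      simp [Int.ofNat_natAbs_of_nonpos hneg]
  have he2sq : (e₂:ℤ) * (e₂:ℤ) = 1 := by
    rcases Int.units_eq_one_or e₂ with h|h <;> rw [h] <;> norm_num
  -- gcd of z with k
  have hyk : Int.gcd y (k:ℤ) = 1 := by
    have : Int.gcd y (k:ℤ) = Int.gcd y D := by
      unfold Int.gcd
      rw [Int.natAbs_natCast, hkD]
    rw [this]; exact hgyD
  set zz := (e₂:ℤ) * y with hzz
  have hgzzk : Int.gcd zz (k:ℤ) = 1 := by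
    rcases Int.units_eq_one_or e₂ with h|h <;> rw [hzz, h]
    · simpa using hyk
    · simpa [Int.neg_gcd] using hyk
  set q₀ := (zz - 1) / (k:ℤ) with hq₀
  set x := (zz - 1) % (k:ℤ) + 1 with hxdef
  have hxz : x = zz - (k:ℤ) * q₀ := by rw [hxdef, hq₀, Int.emod_def]; ring
  have hknz : (k:ℤ) ≠ 0 := by exact_mod_cast hkpos.ne'
  have hkposz : (0:ℤ) < k := by exact_mod_cast hkpos
  have hx1 : 1 ≤ x := by
    have := Int.emod_nonneg (zz - 1) hknz
    omega
  have hx2 : x ≤ (k:ℤ) := by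
    have := Int.emod_lt_of_pos (zz - 1) hkposz
    omega
  have hgx : Int.gcd x (k:ℤ) = 1 := by
    have hc : IsCoprime zz ((k:ℤ)) := Int.isCoprime_iff_gcd_eq_one.mpr hgzzk
    have hx' : x = zz + (k:ℤ) * (-q₀) := by rw [hxz]; ring
    rw [hx']
    exact Int.isCoprime_iff_gcd_eq_one.mp (hc.add_mul_left_left _)
  have hxk1 : 2 ≤ k → x ≤ (k:ℤ) - 1 := by
    intro hk2
    by_contra h
    push_neg at h
    have hxk : x = (k:ℤ) := by omega
    rw [hxk] at hgx
    have : k = 1 := by simpa [Int.gcd_self, Int.natAbs_natCast] using hgx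
    omega
  -- the matrix
  set A : Matrix (Fin 2) (Fin 2) ℤ := !![u + q₀*q, w - q₀*p; -q, p] with hA
  have hdetA : A.det = 1 := by
    rw [hA, Matrix.det_fin_two_of]
    linear_combination -hbez
  have hmul1 : A.mulVec ![p, q] = ((1:ℤˣ):ℤ) • ![1, 0] := by
    funext i
    fin_cases i
    · simp [hA, Matrix.mulVec, dotProduct, Fin.sum_univ_two]
      first
        | linear_combination hbez
        | linear_combination -hbez
    · simp [hA, Matrix.mulVec, dotProduct, Fin.sum_univ_two]
      first
        | ring
        | linear_combination (0:ℤ)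
        | skip
  have key0 : y - q₀ * D = (e₂:ℤ) * x := by
    rw [hxz, hzz]
    linear_combination (-y) * he2sq + (-q₀) * hDk
  have hmul2 : A.mulVec ![r, s] = ((e₂:ℤˣ):ℤ) • ![x, (k:ℤ)] := by
    funext i
    fin_cases i
    · simp [hA, Matrix.mulVec, dotProduct, Fin.sum_univ_two]
      first
        | linear_combination key0 - hy + q₀*hD
        | linear_combination -key0 + hy - q₀*hD
    · simp [hA, Matrix.mulVec, dotProduct, Fin.sum_univ_two]
      first
        | linear_combination hDk - hD
        | linear_combination hD - hDk
  have hdetA2 : A 0 0 * A 1 1 - A 0 1 * A 1 0 = 1 := by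
    rw [← Matrix.det_fin_two]; exact hdetA
  refine ⟨A, x, 1, e₂, Or.inl hdetA, hmul1, hmul2, hx1, hx2, hxk1, hgx, ?_⟩
  intro A' x' e₁' e₂' hdet' hA1' hA2' hx1' hx2' hgx'
  have c1 := congrFun hA1' 0
  have c2 := congrFun hA1' 1
  have c3 := congrFun hA2' 0
  have c4 := congrFun hA2' 1
  simp only [Matrix.mulVec, dotProduct, Fin.sum_univ_two, Matrix.cons_val_zero,
    Matrix.cons_val_one, Matrix.head_cons, Pi.smul_apply, smul_eq_mul, mul_one, mul_zero] at c1 c2 c3 c4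
  have d1 := congrFun hmul1 0
  have d2 := congrFun hmul1 1
  have d3 := congrFun hmul2 0
  have d4 := congrFun hmul2 1
  simp only [Matrix.mulVec, dotProduct, Fin.sum_univ_two, Matrix.cons_val_zero,
    Matrix.cons_val_one, Matrix.head_cons, Pi.smul_apply, smul_eq_mul, mul_one, mul_zero,
    Units.val_one, one_mul] at d1 d2 d3 d4
  rw [Matrix.det_fin_two] at hdet'
  have hu2 : (e₂:ℤ) = 1 ∨ (e₂:ℤ) = -1 := by
    rcases Int.units_eq_one_or e₂ with h|h <;> rw [h] <;> norm_num
  have hu1' : (e₁':ℤ) = 1 ∨ (e₁':ℤ) = -1 := by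
    rcases Int.units_eq_one_or e₁' with h|h <;> rw [h] <;> norm_num
  have hu2' : (e₂':ℤ) = 1 ∨ (e₂':ℤ) = -1 := by
    rcases Int.units_eq_one_or e₂' with h|h <;> rw [h] <;> norm_num
  obtain ⟨σ, hσpm, hσ1, hσ2⟩ :=
    key_arith p q r s x (k:ℤ) (A 0 0) (A 0 1) (A 1 0) (A 1 1) 1 (e₂:ℤ)
      (Or.inl rfl) hu2 (Or.inl hdetA2) d1 d2 d3 d4
  obtain ⟨σ', hσpm', hσ1', hσ2'⟩ :=
    key_arith p q r s x' (k:ℤ) (A' 0 0) (A' 0 1) (A' 1 0) (A' 1 1) (e₁':ℤ) (e₂':ℤ)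
      hu1' hu2' hdet' c1 c2 c3 c4
  exact unique_x p q h1 k hk x x' σ σ' r s hσpm hσpm' hσ1 hσ2 hσ1' hσ2'
    hx1 hx2 hgx hx1' hx2' hgx'
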